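/- Fix τ, μ > 0, a matrix B ∈ ℝ^{n×m}, and y ∈ ℝ^m. For x ∈ ℝ^n define p(μ,x,y) = argmin_{u ∈ Δ^m} { -uᵀy - τν(u) + (1/(2μ))‖x - Bu‖₂² }. Then for all x₁, x₂ ∈ ℝ^n: (i) ‖B(p(μ,x₂,y) - p(μ,x₁,y))‖₂ ≤ ‖x₂ - x₁‖₂, and (ii) ‖p(μ,x₂,y) - p(μ,x₁,y)‖₂ ≤ (1/(2√(μτ)))‖x₂ - x₁‖₂. -/

import Mathlib

set_option maxHeartbeats 1000000


noncomputable def e2 {n : ℕ} (v : Fin n → ℝ) : ℝ := Real.sqrt (∑ i, (v i) ^ 2)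

noncomputable def entropy {n : ℕ} (u : Fin n → ℝ) : ℝ :=
  -∑ a, u a * Real.log (u a)

open Real Finset Set

lemma g_convex : ConvexOn ℝ (Set.Icc (0:ℝ) 1) (fun s => s * Real.log s - s^2/2) := by
  have hderiv : ∀ x ∈ Set.Ioo (0:ℝ) 1,
      deriv (fun s => s * Real.log s - s^2/2) x = Real.log x + 1 - x := by
    intro x hx
    have hx0 : x ≠ 0 := ne_of_gt hx.1
    have h1 : HasDerivAt (fun s : ℝ => s * Real.log s - s^2/2)
        ((Real.log x + 1) - (2 * x ^ 1)/2) x :=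
      (Real.hasDerivAt_mul_log hx0).sub ((hasDerivAt_pow 2 x).div_const 2)
    have := h1.deriv
    rw [this]; ring
  apply convexOn_of_deriv2_nonneg (convex_Icc 0 1)
  · exact (Real.continuous_mul_log.sub (by continuity)).continuousOn
  · intro x hx
    rw [interior_Icc] at hx
    have hx0 : x ≠ 0 := ne_of_gt hx.1
    exact (((Real.hasDerivAt_mul_log hx0).sub
      ((hasDerivAt_pow 2 x).div_const 2)).differentiableAt).differentiableWithinAt
  · rw [interior_Icc]
    apply DifferentiableOn.congr (f := fun x => Real.log x + 1 - x)
    · intro x hx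
      exact (((Real.differentiableAt_log (ne_of_gt hx.1)).add_const 1).sub
        differentiable_id.differentiableAt).differentiableWithinAt
    · exact hderiv
  · intro x hx
    rw [interior_Icc] at hx
    have heq : deriv (fun s : ℝ => s * Real.log s - s^2/2)
        =ᶠ[nhds x] (fun x => Real.log x + 1 - x) := by
      filter_upwards [isOpen_Ioo.mem_nhds hx] with z hz using hderiv z hz
    have : deriv^[2] (fun s : ℝ => s * Real.log s - s^2/2) x
        = deriv (fun x => Real.log x + 1 - x) x := by
      simp only [Function.iterate_succ, Function.iterate_zero, Function.comp_apply, id]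
      exact Filter.EventuallyEq.deriv_eq heq
    rw [this]
    have h2 : HasDerivAt (fun x : ℝ => Real.log x + 1 - x) (x⁻¹ - 1) x :=
      ((Real.hasDerivAt_log (ne_of_gt hx.1)).add_const 1).sub (hasDerivAt_id x)
    rw [h2.deriv]
    have : 1 ≤ x⁻¹ := one_le_inv_iff₀.mpr ⟨hx.1, hx.2.le⟩
    linarith

lemma mul_log_strong {a b t : ℝ} (ha : a ∈ Set.Icc (0:ℝ) 1) (hb : b ∈ Set.Icc (0:ℝ) 1)
    (ht0 : 0 ≤ t) (ht1 : t ≤ 1) :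
    ((1-t)*a + t*b) * Real.log ((1-t)*a + t*b) + (1-t)*t/2 * (a-b)^2
      ≤ (1-t) * (a * Real.log a) + t * (b * Real.log b) := by
  have h := g_convex.2 ha hb (by linarith : (0:ℝ) ≤ 1 - t) ht0 (by ring)
  simp only [smul_eq_mul] at h
  nlinarith [h]

lemma limit_trick {K D : ℝ} (hK0 : 0 ≤ K)
    (step : ∀ t : ℝ, 0 < t → t < 1 → (1 - t) * K ≤ D) : K ≤ D := by
  by_contra hcon
  push_neg at hcon
  have h12 : (1 - 1/2) * K ≤ D := step (1/2) (by norm_num) (by norm_num)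
  have hKpos : 0 < K := by linarith
  set t : ℝ := (K - D) / (2 * K) with htdef
  have ht0 : 0 < t := div_pos (by linarith) (by linarith)
  have ht1 : t < 1 := by
    rw [htdef, div_lt_one (by linarith)]
    linarith
  have h := step t ht0 ht1
  have heq : (1 - t) * K = (K + D) / 2 := by
    rw [htdef]
    field_simp
    ring
  rw [heq] at h
  linarith

lemma coord_mem {m : ℕ} {p : Fin m → ℝ} (hp : p ∈ stdSimplex ℝ (Fin m)) (a : Fin m) :
    p a ∈ Set.Icc (0:ℝ) 1 := by
  refine ⟨hp.1 a, ?_⟩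
  rw [← hp.2]
  exact Finset.single_le_sum (fun i _ => hp.1 i) (Finset.mem_univ a)

lemma min_gap {n m : ℕ} (τ μ : ℝ) (hτ : 0 < τ) (hμ : 0 < μ)
    (B : Matrix (Fin n) (Fin m) ℝ) (y : Fin m → ℝ) (x : Fin n → ℝ)
    (p q : Fin m → ℝ) (hp : p ∈ stdSimplex ℝ (Fin m)) (hq : q ∈ stdSimplex ℝ (Fin m))
    (hmin : IsMinOn (fun u : Fin m → ℝ =>
        -(∑ a, u a * y a) - τ * entropy u + (1 / (2 * μ)) * ∑ i, (x i - B.mulVec u i)^2)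
      (stdSimplex ℝ (Fin m)) p) :
    (τ/2) * (∑ a, (q a - p a)^2) + (1/(2*μ)) * (∑ i, (B.mulVec q i - B.mulVec p i)^2)
      ≤ (-(∑ a, q a * y a) - τ * entropy q + (1 / (2 * μ)) * ∑ i, (x i - B.mulVec q i)^2)
        - (-(∑ a, p a * y a) - τ * entropy p + (1 / (2 * μ)) * ∑ i, (x i - B.mulVec p i)^2) := by
  set F : (Fin m → ℝ) → ℝ := fun u =>
    -(∑ a, u a * y a) - τ * entropy u + (1 / (2 * μ)) * ∑ i, (x i - B.mulVec u i)^2 with hF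
  set S : ℝ := ∑ a, (q a - p a)^2 with hS
  set T : ℝ := ∑ i, (B.mulVec q i - B.mulVec p i)^2 with hT
  set K : ℝ := (τ/2) * S + (1/(2*μ)) * T with hK
  set D : ℝ := F q - F p with hD
  show K ≤ D
  clear_value D
  have hK0 : 0 ≤ K := by
    apply add_nonneg
    · exact mul_nonneg (by positivity) (Finset.sum_nonneg fun a _ => sq_nonneg _)
    · exact mul_nonneg (by positivity) (Finset.sum_nonneg fun i _ => sq_nonneg _)
  have step : ∀ t : ℝ, 0 < t → t < 1 → (1 - t) * K ≤ D := by
    intro t ht0 ht1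
    set w : Fin m → ℝ := fun a => (1-t) * p a + t * q a with hwdef
    have hw : w ∈ stdSimplex ℝ (Fin m) := by
      have := (convex_stdSimplex ℝ (Fin m)) hp hq (by linarith : (0:ℝ) ≤ 1 - t)
        ht0.le (by ring)
      convert this using 1
      funext a
      simp [hwdef]
    have hBw : ∀ i, B.mulVec w i = (1-t) * B.mulVec p i + t * B.mulVec q i := by
      intro i
      simp only [Matrix.mulVec, dotProduct, hwdef]
      rw [Finset.mul_sum, Finset.mul_sum, ← Finset.sum_add_distrib]
      exact Finset.sum_congr rfl fun a _ => by ring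
    have hlin : ∑ a, w a * y a = (1-t) * ∑ a, p a * y a + t * ∑ a, q a * y a := by
      rw [Finset.mul_sum, Finset.mul_sum, ← Finset.sum_add_distrib]
      exact Finset.sum_congr rfl fun a _ => by simp only [hwdef]; ring
    have hquad : ∑ i, (x i - B.mulVec w i)^2
        = (1-t) * ∑ i, (x i - B.mulVec p i)^2 + t * ∑ i, (x i - B.mulVec q i)^2
          - (1-t) * t * T := by
      rw [hT, Finset.mul_sum, Finset.mul_sum, Finset.mul_sum, ← Finset.sum_add_distrib,
        ← Finset.sum_sub_distrib]
      exact Finset.sum_congr rfl fun i _ => by rw [hBw i]; ring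
    have hent : ∑ a, w a * Real.log (w a)
        ≤ (1-t) * ∑ a, p a * Real.log (p a) + t * ∑ a, q a * Real.log (q a)
          - (1-t) * t / 2 * S := by
      have h1 : ∑ a, (w a * Real.log (w a) + (1-t)*t/2 * (p a - q a)^2)
          ≤ ∑ a, ((1-t) * (p a * Real.log (p a)) + t * (q a * Real.log (q a))) :=
        Finset.sum_le_sum fun a _ =>
          mul_log_strong (coord_mem hp a) (coord_mem hq a) ht0.le ht1.le
      rw [Finset.sum_add_distrib, Finset.sum_add_distrib, ← Finset.mul_sum, ← Finset.mul_sum,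
        ← Finset.mul_sum] at h1
      have h2 : ∑ a, (p a - q a)^2 = S := by
        rw [hS]; exact Finset.sum_congr rfl fun a _ => by ring
      rw [h2] at h1
      linarith
    have key : (1-t) * F p + t * F q - (1-t) * t * K - F w
        = τ * ((1-t) * (∑ a, p a * Real.log (p a)) + t * (∑ a, q a * Real.log (q a))
            - (1-t) * t / 2 * S - ∑ a, w a * Real.log (w a)) := by
      simp only [hF, entropy, hK]
      rw [hlin, hquad]
      ring
    have hnn : 0 ≤ (1-t) * F p + t * F q - (1-t) * t * K - F w := by
      rw [key]
      exact mul_nonneg hτ.le (by linarith)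
    have hfw : F p ≤ F w := hmin hw
    have h' : t * ((1-t) * K) ≤ t * D := by simp only [hD]; nlinarith
    exact le_of_mul_le_mul_left h' ht0
  exact limit_trick hK0 step

/-- Sensitivity of `p(μ,x,y) = argmin_{u ∈ Δ^m} { -uᵀy - τν(u) + (1/(2μ))‖x - Bu‖₂² }`
in the variable `x`:
(i) `‖B(p(μ,x₂,y) - p(μ,x₁,y))‖₂ ≤ ‖x₂ - x₁‖₂`, and
(ii) `‖p(μ,x₂,y) - p(μ,x₁,y)‖₂ ≤ (1/(2√(μτ)))‖x₂ - x₁‖₂`. -/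
theorem argmin_sensitivity_in_x {n m : ℕ} (τ μ : ℝ) (hτ : 0 < τ) (hμ : 0 < μ)
    (B : Matrix (Fin n) (Fin m) ℝ) (y : Fin m → ℝ) (x₁ x₂ : Fin n → ℝ)
    (p₁ p₂ : Fin m → ℝ)
    (hp₁ : p₁ ∈ stdSimplex ℝ (Fin m)) (hp₂ : p₂ ∈ stdSimplex ℝ (Fin m))
    (hmin₁ : IsMinOn (fun u : Fin m → ℝ =>
        -(∑ a, u a * y a) - τ * entropy u
          + (1 / (2 * μ)) * (e2 (fun i => x₁ i - B.mulVec u i)) ^ 2)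
      (stdSimplex ℝ (Fin m)) p₁)
    (hmin₂ : IsMinOn (fun u : Fin m → ℝ =>
        -(∑ a, u a * y a) - τ * entropy u
          + (1 / (2 * μ)) * (e2 (fun i => x₂ i - B.mulVec u i)) ^ 2)
      (stdSimplex ℝ (Fin m)) p₂) :
    e2 (fun i => B.mulVec p₂ i - B.mulVec p₁ i) ≤ e2 (fun i => x₂ i - x₁ i) ∧
    e2 (fun a => p₂ a - p₁ a)
      ≤ (1 / (2 * Real.sqrt (μ * τ))) * e2 (fun i => x₂ i - x₁ i) := by
  have hobj : ∀ x : Fin n → ℝ, (fun u : Fin m → ℝ =>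
      -(∑ a, u a * y a) - τ * entropy u
        + (1 / (2 * μ)) * (e2 (fun i => x i - B.mulVec u i)) ^ 2)
      = (fun u : Fin m → ℝ =>
      -(∑ a, u a * y a) - τ * entropy u
        + (1 / (2 * μ)) * ∑ i, (x i - B.mulVec u i)^2) := by
    intro x
    funext u
    rw [e2, Real.sq_sqrt (Finset.sum_nonneg fun i _ => sq_nonneg _)]
  rw [hobj x₁] at hmin₁
  rw [hobj x₂] at hmin₂
  set S : ℝ := ∑ a, (p₂ a - p₁ a)^2 with hSdef
  set T : ℝ := ∑ i, (B.mulVec p₂ i - B.mulVec p₁ i)^2 with hTdef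
  set A : ℝ := ∑ i, (x₂ i - x₁ i)^2 with hAdef
  set I : ℝ := ∑ i, (x₂ i - x₁ i) * (B.mulVec p₂ i - B.mulVec p₁ i) with hIdef
  have gap1 := min_gap τ μ hτ hμ B y x₁ p₁ p₂ hp₁ hp₂ hmin₁
  have gap2 := min_gap τ μ hτ hμ B y x₂ p₂ p₁ hp₂ hp₁ hmin₂
  rw [← hSdef, ← hTdef] at gap1
  have hSsym : ∑ a, (p₁ a - p₂ a)^2 = S :=
    Finset.sum_congr rfl fun a _ => by ring
  have hTsym : ∑ i, (B.mulVec p₁ i - B.mulVec p₂ i)^2 = T :=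
    Finset.sum_congr rfl fun i _ => by ring
  rw [hSsym, hTsym] at gap2
  have hdiff : ∑ i, (x₁ i - B.mulVec p₂ i)^2 - ∑ i, (x₂ i - B.mulVec p₂ i)^2
      + (∑ i, (x₂ i - B.mulVec p₁ i)^2 - ∑ i, (x₁ i - B.mulVec p₁ i)^2) = 2 * I := by
    rw [hIdef, Finset.mul_sum, ← Finset.sum_sub_distrib, ← Finset.sum_sub_distrib,
      ← Finset.sum_add_distrib]
    exact Finset.sum_congr rfl fun i _ => by ring
  have hμ0 : μ ≠ 0 := ne_of_gt hμ
  have hRHS : (-∑ a, p₂ a * y a - τ * entropy p₂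
        + 1 / (2 * μ) * ∑ i, (x₁ i - B.mulVec p₂ i) ^ 2
      - (-∑ a, p₁ a * y a - τ * entropy p₁
        + 1 / (2 * μ) * ∑ i, (x₁ i - B.mulVec p₁ i) ^ 2))
      + (-∑ a, p₁ a * y a - τ * entropy p₁
        + 1 / (2 * μ) * ∑ i, (x₂ i - B.mulVec p₁ i) ^ 2
      - (-∑ a, p₂ a * y a - τ * entropy p₂
        + 1 / (2 * μ) * ∑ i, (x₂ i - B.mulVec p₂ i) ^ 2)) = (1/μ) * I := by
    linear_combination (1/(2*μ)) * hdiff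
  have hsum2 : τ/2 * S + 1/(2*μ) * T + (τ/2 * S + 1/(2*μ) * T) ≤ (1/μ) * I := by
    rw [← hRHS]
    exact add_le_add gap1 gap2
  have hclear : μ * (τ * S) + T ≤ I := by
    have h2 := mul_le_mul_of_nonneg_left hsum2 hμ.le
    have h3 : μ * (τ/2 * S + 1/(2*μ) * T + (τ/2 * S + 1/(2*μ) * T)) = μ * (τ * S) + T := by
      field_simp
      ring
    have h4 : μ * (1/μ * I) = I := by field_simp
    rw [h3, h4] at h2
    exact h2
  -- Cauchy-Schwarz
  have hA0 : (0:ℝ) ≤ A := Finset.sum_nonneg fun i _ => sq_nonneg _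
  have hT0 : (0:ℝ) ≤ T := Finset.sum_nonneg fun i _ => sq_nonneg _
  have hS0 : (0:ℝ) ≤ S := Finset.sum_nonneg fun a _ => sq_nonneg _
  have hcs : I^2 ≤ A * T := by
    rw [hIdef, hAdef, hTdef]
    exact Finset.sum_mul_sq_le_sq_mul_sq Finset.univ _ _
  set α : ℝ := e2 (fun i => x₂ i - x₁ i) with hα
  set β : ℝ := e2 (fun i => B.mulVec p₂ i - B.mulVec p₁ i) with hβ
  set σ : ℝ := e2 (fun a => p₂ a - p₁ a) with hσ
  have hαA : α^2 = A := Real.sq_sqrt hA0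
  have hβT : β^2 = T := Real.sq_sqrt hT0
  have hσS : σ^2 = S := Real.sq_sqrt hS0
  have hα0 : 0 ≤ α := Real.sqrt_nonneg _
  have hβ0 : 0 ≤ β := Real.sqrt_nonneg _
  have hσ0 : 0 ≤ σ := Real.sqrt_nonneg _
  have hIαβ : I ≤ α * β := by
    have h1 : I ≤ |I| := le_abs_self I
    have h2 : |I| = Real.sqrt (I^2) := (Real.sqrt_sq_eq_abs I).symm
    have h3 : Real.sqrt (I^2) ≤ Real.sqrt (A * T) := Real.sqrt_le_sqrt hcs
    have h4 : Real.sqrt (A * T) = α * β := by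
      rw [← hαA, ← hβT, Real.sqrt_mul (sq_nonneg α), Real.sqrt_sq hα0, Real.sqrt_sq hβ0]
    linarith
  have main : μ * τ * σ^2 + β^2 ≤ α * β := by
    rw [hσS, hβT]
    calc μ * τ * S + T = μ * (τ * S) + T := by ring
      _ ≤ I := hclear
      _ ≤ α * β := hIαβ
  constructor
  · -- β ≤ α
    have hmain2 : β^2 ≤ α * β := by
      have h0 : 0 ≤ μ * τ * σ^2 := by positivity
      linarith
    rcases eq_or_lt_of_le hβ0 with h | h
    · linarith
    · have hββ : β * β ≤ α * β := by nlinarith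
      exact le_of_mul_le_mul_right hββ h
  · -- σ ≤ (1/(2√(μτ))) α
    have h4 : μ * τ * σ^2 ≤ α^2/4 := by
      nlinarith [main, sq_nonneg (α - 2*β)]
    have hs : Real.sqrt (μ*τ)^2 = μ*τ := Real.sq_sqrt (by positivity)
    have hrw : ((1 / (2 * Real.sqrt (μ * τ))) * α)^2 = α^2 / (4*(μ*τ)) := by
      rw [mul_pow, div_pow, one_pow, mul_pow, hs]
      ring
    have h5 : σ^2 ≤ ((1 / (2 * Real.sqrt (μ * τ))) * α)^2 := by
      rw [hrw, le_div_iff₀ (by positivity : (0:ℝ) < 4*(μ*τ))]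
      nlinarith [h4]
    have hrhs0 : 0 ≤ (1 / (2 * Real.sqrt (μ * τ))) * α := by positivity
    calc σ = Real.sqrt (σ^2) := (Real.sqrt_sq hσ0).symm
      _ ≤ Real.sqrt (((1 / (2 * Real.sqrt (μ * τ))) * α)^2) := Real.sqrt_le_sqrt h5
      _ = (1 / (2 * Real.sqrt (μ * τ))) * α := Real.sqrt_sq hrhs0
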